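/- Let ñ = p₁···p_t be a product of distinct primes different from 2 and 3, with ñ ≡ 1 (mod 8). Define the (2t+6)×(2t+6) matrix A₁ over F₂ in block form as in the paper (rows encoding local solvability conditions at ∞, 2, 3 and the primes pᵢ for the elliptic curve E_ñ : y² = x(x+3ñ)(x−ñ)). Then the rank of A₁ over F₂ is even if ñ ≡ 1 (mod 3) (i.e. [-3/ñ] = 0) and odd if ñ ≡ 2 (mod 3) (i.e. [-3/ñ] = 1). -/

import Mathlib

set_option linter.unusedSectionVars false
set_option maxHeartbeats 1000000

open Matrix

/-- The additive Legendre (Jacobi) symbol `[n/m] ∈ 𝔽₂`. -/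
def addLeg (n : ℤ) (m : ℕ) : ZMod 2 := if jacobiSym n m = 1 then 0 else 1

/-- `r_d = ([d/p₁],…,[d/p_t])`. -/
def rvec {t : ℕ} (p : Fin t → ℕ) (d : ℤ) : Fin t → ZMod 2 := fun i => addLeg d (p i)


namespace MonskyAux

abbrev PM (a : ℤ) (m : ℕ) : Prop := jacobiSym a m = 1 ∨ jacobiSym a m = -1

lemma pm_of_gcd {a : ℤ} {m : ℕ} (h : a.gcd m = 1) : PM a m :=
  jacobiSym.eq_one_or_neg_one h

lemma addLeg_mul_left {a b : ℤ} {m : ℕ} (ha : PM a m) (hb : PM b m) :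
    addLeg (a * b) m = addLeg a m + addLeg b m := by
  unfold addLeg
  rw [jacobiSym.mul_left]
  rcases ha with h | h <;> rcases hb with h' | h' <;> rw [h, h'] <;> norm_num <;> decide

lemma addLeg_mul_right {a : ℤ} {m n : ℕ} (hm0 : m ≠ 0) (hn0 : n ≠ 0)
    (hm : PM a m) (hn : PM a n) :
    addLeg a (m * n) = addLeg a m + addLeg a n := by
  unfold addLeg
  rw [jacobiSym.mul_right' a hm0 hn0]
  rcases hm with h | h <;> rcases hn with h' | h' <;> rw [h, h'] <;> norm_num <;> decide

lemma pm_mul_right {a : ℤ} {m n : ℕ} (hm0 : m ≠ 0) (hn0 : n ≠ 0)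
    (hm : PM a m) (hn : PM a n) : PM a (m * n) := by
  rw [PM, jacobiSym.mul_right' a hm0 hn0]
  rcases hm with h | h <;> rcases hn with h' | h' <;> rw [h, h'] <;> norm_num

lemma addLeg_prod {t : ℕ} (p : Fin t → ℕ) (hp0 : ∀ i, p i ≠ 0) {a : ℤ}
    (ha : ∀ i, PM a (p i)) (s : Finset (Fin t)) :
    addLeg a (∏ k ∈ s, p k) = ∑ k ∈ s, addLeg a (p k) ∧ PM a (∏ k ∈ s, p k) := by
  classical
  induction s using Finset.induction_on with
  | empty => simp [addLeg, jacobiSym.one_right, PM]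
  | insert x s hx ih =>
    have hs0 : (∏ k ∈ s, p k) ≠ 0 := Finset.prod_ne_zero_iff.2 fun i _ => hp0 i
    rw [Finset.prod_insert hx, Finset.sum_insert hx]
    refine ⟨?_, pm_mul_right (hp0 x) hs0 (ha x) ih.2⟩
    rw [addLeg_mul_right (hp0 x) hs0 (ha x) ih.2, ih.1]

lemma cast2 (k : ℕ) : (k : ZMod 2) = if k % 2 = 0 then 0 else 1 := by
  rw [← ZMod.natCast_mod k 2]
  rcases Nat.mod_two_eq_zero_or_one k with h | h <;> rw [h] <;> simp

lemma sgn2_neg_one_pow (k : ℕ) :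
    (if ((-1 : ℤ) ^ k) = 1 then (0 : ZMod 2) else 1) = (k : ZMod 2) := by
  rw [cast2]
  rcases Nat.even_or_odd k with h | h
  · rw [h.neg_one_pow, if_pos rfl, if_pos (Nat.even_iff.mp h)]
  · rw [h.neg_one_pow, if_neg (by norm_num), if_neg (by simp [Nat.odd_iff.mp h])]

lemma sgn2_mul {x y : ℤ} (hx : x = 1 ∨ x = -1) (hy : y = 1 ∨ y = -1) :
    (if x * y = 1 then (0 : ZMod 2) else 1)
      = (if x = 1 then (0 : ZMod 2) else 1) + (if y = 1 then 0 else 1) := by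
  rcases hx with rfl | rfl <;> rcases hy with rfl | rfl <;> norm_num <;> decide

lemma addLeg_neg_one_eq_half {m : ℕ} (hm : m % 2 = 1) :
    addLeg (-1) m = ((m / 2 : ℕ) : ZMod 2) := by
  unfold addLeg
  rw [jacobiSym.at_neg_one (Nat.odd_iff.2 hm), ZMod.χ₄_eq_neg_one_pow hm]
  exact sgn2_neg_one_pow _

lemma addLeg_neg_one_of_mod_four {m : ℕ} (hm : m % 4 = 1) : addLeg (-1) m = 0 := by
  unfold addLeg
  rw [jacobiSym.at_neg_one (Nat.odd_iff.2 (by omega)), ZMod.χ₄_nat_one_mod_four hm]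
  simp

lemma addLeg_two_of_mod_eight {m : ℕ} (hm : m % 8 = 1) : addLeg 2 m = 0 := by
  unfold addLeg
  have h2 : m % 2 = 1 := by omega
  rw [jacobiSym.at_two (Nat.odd_iff.2 h2), ZMod.χ₈_nat_eq_if_mod_eight, hm, h2]
  norm_num

/-- quadratic reciprocity, additive form -/
lemma addLeg_reci {q r : ℕ} (hq : q % 2 = 1) (hr : r % 2 = 1) (hgcd : Nat.Coprime r q) :
    addLeg q r = addLeg r q + addLeg (-1) q * addLeg (-1) r := by
  have hPM : PM (r : ℤ) q := pm_of_gcd (by rw [Int.gcd_natCast_natCast]; exact hgcd)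
  have key := jacobiSym.quadratic_reciprocity (Nat.odd_iff.2 hq) (Nat.odd_iff.2 hr)
  unfold addLeg
  have hpow : ((-1 : ℤ)) ^ (q / 2 * (r / 2)) = 1 ∨ ((-1 : ℤ)) ^ (q / 2 * (r / 2)) = -1 := by
    rcases Nat.even_or_odd (q / 2 * (r / 2)) with h | h
    · exact Or.inl h.neg_one_pow
    · exact Or.inr h.neg_one_pow
  have e1 : (if jacobiSym (-1) q = 1 then (0 : ZMod 2) else 1) = ((q / 2 : ℕ) : ZMod 2) :=
    addLeg_neg_one_eq_half hq
  have e2 : (if jacobiSym (-1) r = 1 then (0 : ZMod 2) else 1) = ((r / 2 : ℕ) : ZMod 2) :=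
    addLeg_neg_one_eq_half hr
  rw [key, sgn2_mul hpow hPM, sgn2_neg_one_pow, e1, e2]
  push_cast
  ring

lemma addLeg_neg_three {n : ℕ} (h8 : n % 8 = 1) :
    (n % 3 = 1 → addLeg (-3) n = 0) ∧ (n % 3 = 2 → addLeg (-3) n = 1) := by
  have hn4 : n % 4 = 1 := by omega
  have hodd : Odd n := Nat.odd_iff.2 (by omega)
  have h3n : jacobiSym (-3) n = jacobiSym ((n % 3 : ℕ) : ℤ) 3 := by
    have h' : ((-3 : ℤ)) = (-1) * 3 := by norm_num
    rw [h', jacobiSym.mul_left, jacobiSym.at_neg_one hodd, ZMod.χ₄_nat_one_mod_four hn4, one_mul]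
    have h3 : ((3 : ℕ) : ℤ) = (3 : ℤ) := by norm_num
    rw [← h3, jacobiSym.quadratic_reciprocity_one_mod_four' (by decide) hn4,
      jacobiSym.mod_left]
    norm_num
  constructor <;> intro h <;> unfold addLeg <;> rw [h3n, h]
  · simp [jacobiSym.one_left]
  · have h2 : jacobiSym ((2 : ℕ) : ℤ) 3 = -1 := by
      rw [Nat.cast_ofNat, jacobiSym.at_two (by decide), ZMod.χ₈_nat_eq_if_mod_eight]
      norm_num
    rw [h2]
    norm_num

end MonskyAux

/-! ### Rédei matrix identities -/

/-- The Rédei-type matrix `A`: `a_{ij} = [p_j/p_i]` (`i ≠ j`),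
`a_{ii} = ∑_{j≠i} a_{ij}`. -/
def redeiMatrix {t : ℕ} (p : Fin t → ℕ) : Matrix (Fin t) (Fin t) (ZMod 2) :=
  Matrix.of fun i j =>
    if i = j then ∑ k ∈ Finset.univ.erase i, addLeg (p k) (p i)
    else addLeg (p j) (p i)

namespace MonskyAux

lemma zmod2_mul_self (a : ZMod 2) : a * a = a := by revert a; decide

lemma zmod2_add_self (a : ZMod 2) : a + a = 0 := by revert a; decide

section Redei

variable {t : ℕ} (p : Fin t → ℕ)

lemma redei_apply_ne {i j : Fin t} (h : i ≠ j) :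
    redeiMatrix p i j = addLeg (p j) (p i) := by
  simp [redeiMatrix, h]

lemma redei_apply_diag (i : Fin t) :
    redeiMatrix p i i = ∑ k ∈ Finset.univ.erase i, addLeg (p k) (p i) := by
  simp [redeiMatrix]

lemma redei_mulVec_one : redeiMatrix p *ᵥ (fun _ => 1) = 0 := by
  funext i
  have h := Finset.sum_erase_add Finset.univ (fun j => redeiMatrix p i j) (Finset.mem_univ i)
  have herase : ∑ j ∈ Finset.univ.erase i, redeiMatrix p i j
      = ∑ j ∈ Finset.univ.erase i, addLeg (p j) (p i) :=
    Finset.sum_congr rfl fun j hj => redei_apply_ne p (Finset.ne_of_mem_erase hj).symm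
  show ∑ j, redeiMatrix p i j * 1 = 0
  simp only [mul_one]
  rw [← h]
  show ∑ j ∈ Finset.univ.erase i, redeiMatrix p i j + redeiMatrix p i i = 0
  rw [herase, redei_apply_diag, zmod2_add_self]

variable (hp : ∀ i, (p i).Prime) (hinj : Function.Injective p)
  (h2 : ∀ i, p i ≠ 2) (h3 : ∀ i, p i ≠ 3)

include hp h2 in
lemma p_odd (i : Fin t) : p i % 2 = 1 :=
  Nat.odd_iff.1 ((hp i).odd_of_ne_two (h2 i))

include hp hinj in
lemma p_coprime {i j : Fin t} (h : i ≠ j) : Nat.Coprime (p i) (p j) :=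
  (Nat.coprime_primes (hp i) (hp j)).2 fun he => h (hinj he)

include hp hinj h2 in
lemma redei_transpose :
    (redeiMatrix p)ᵀ = redeiMatrix p + diagonal (rvec p (-1))
      + vecMulVec (rvec p (-1)) (rvec p (-1)) := by
  ext i j
  by_cases h : i = j
  · subst h
    simp only [transpose_apply, Matrix.add_apply, diagonal_apply_eq, vecMulVec_apply]
    rw [rvec, zmod2_mul_self]
    conv_lhs => rw [← add_zero (redeiMatrix p i i)]
    rw [← zmod2_add_self (addLeg (-1) (p i)), ← add_assoc]
  · simp only [transpose_apply, Matrix.add_apply, diagonal_apply_ne _ h, vecMulVec_apply, add_zero]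
    rw [redei_apply_ne p (fun he => h he.symm), redei_apply_ne p h]
    have hr := addLeg_reci (q := p i) (r := p j) (p_odd p hp h2 i) (p_odd p hp h2 j)
      (p_coprime p hp hinj (fun he => h he.symm))
    rw [hr, rvec, rvec]

include hp h2 in
lemma pm_neg_one (i : Fin t) : PM (-1) (p i) := by
  apply pm_of_gcd
  simp [Int.gcd]

include hp h2 in
lemma pm_two (i : Fin t) : PM 2 (p i) := by
  apply pm_of_gcd
  have : ((2 : ℤ)).gcd (p i) = Nat.gcd 2 (p i) := rfl
  rw [this]
  exact (Nat.coprime_primes Nat.prime_two (hp i)).2 fun he => h2 i he.symm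

include hp h3 in
lemma pm_three (i : Fin t) : PM 3 (p i) := by
  apply pm_of_gcd
  have : ((3 : ℤ)).gcd (p i) = Nat.gcd 3 (p i) := rfl
  rw [this]
  exact (Nat.coprime_primes Nat.prime_three (hp i)).2 fun he => h3 i he.symm

include hp h3 in
lemma pm_neg_three (i : Fin t) : PM (-3) (p i) := by
  apply pm_of_gcd
  have : ((-3 : ℤ)).gcd (p i) = Nat.gcd 3 (p i) := rfl
  rw [this]
  exact (Nat.coprime_primes Nat.prime_three (hp i)).2 fun he => h3 i he.symm

include hp h2 h3 in
lemma delta_eq : rvec p (-3) = rvec p (-1) + rvec p 3 := by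
  funext i
  have : ((-3 : ℤ)) = (-1) * 3 := by norm_num
  show addLeg (-3) (p i) = _
  rw [this, addLeg_mul_left (pm_neg_one p hp h2 i) (pm_three p hp h3 i)]
  rfl

section Sums

variable (h8 : (∏ k, p k) % 8 = 1)

include hp in
lemma p_ne_zero (i : Fin t) : p i ≠ 0 := (hp i).ne_zero

include hp h2 h8 in
lemma sum_eps : ∑ i, rvec p (-1) i = 0 := by
  show ∑ i, addLeg (-1) (p i) = 0
  rw [← (addLeg_prod p (p_ne_zero p hp) (pm_neg_one p hp h2) Finset.univ).1]
  exact addLeg_neg_one_of_mod_four (by omega)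

include hp h2 h8 in
lemma sum_beta : ∑ i, rvec p 2 i = 0 := by
  show ∑ i, addLeg 2 (p i) = 0
  rw [← (addLeg_prod p (p_ne_zero p hp) (pm_two p hp h2) Finset.univ).1]
  exact addLeg_two_of_mod_eight h8

include hp h3 in
lemma sum_del : ∑ i, rvec p (-3) i = addLeg (-3) (∏ k, p k) :=
  ((addLeg_prod p (p_ne_zero p hp) (pm_neg_three p hp h3) Finset.univ).1).symm

include hp h2 h3 h8 in
lemma sum_gam : ∑ i, rvec p 3 i = addLeg (-3) (∏ k, p k) := by
  have hd : ∀ i, rvec p 3 i = rvec p (-3) i + rvec p (-1) i := by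
    intro i
    have := congrFun (delta_eq p hp h2 h3) i
    rw [this]
    show _ = rvec p (-1) i + rvec p 3 i + rvec p (-1) i
    rw [add_comm (rvec p (-1) i), add_assoc, zmod2_add_self, add_zero]
  calc ∑ i, rvec p 3 i = ∑ i, (rvec p (-3) i + rvec p (-1) i) :=
        Finset.sum_congr rfl fun i _ => hd i
    _ = ∑ i, rvec p (-3) i + ∑ i, rvec p (-1) i := Finset.sum_add_distrib
    _ = addLeg (-3) (∏ k, p k) := by
        rw [sum_del p hp h3, sum_eps p hp h2 h8, add_zero]

include hp hinj h2 h8 in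
lemma redei_vecMul_one : (fun _ => 1) ᵥ* redeiMatrix p = rvec p (-1) := by
  rw [← Matrix.mulVec_transpose, redei_transpose p hp hinj h2]
  funext j
  show ((redeiMatrix p + diagonal (rvec p (-1)) + vecMulVec (rvec p (-1)) (rvec p (-1)))
      *ᵥ (fun _ => 1)) j = _
  rw [Matrix.add_mulVec, Matrix.add_mulVec, redei_mulVec_one]
  have hdiag : (diagonal (rvec p (-1)) *ᵥ fun _ => 1) = rvec p (-1) := by
    funext i
    rw [Matrix.mulVec_diagonal, mul_one]
  have hvv : (vecMulVec (rvec p (-1)) (rvec p (-1)) *ᵥ fun _ => 1) = 0 := by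
    funext i
    show ∑ k, rvec p (-1) i * rvec p (-1) k * 1 = 0
    simp only [mul_one]
    rw [← Finset.mul_sum, sum_eps p hp h2 h8, mul_zero]
  rw [hdiag, hvv]
  simp

end Sums

end Redei

end MonskyAux
open Matrix

namespace MonskyAux2

variable {R : Type*} [CommRing R] {m n o : Type*} [Fintype m] [Fintype n] [Fintype o]

lemma vecMulVec_mul (a : m → R) (b : n → R) (M : Matrix n o R) :
    vecMulVec a b * M = vecMulVec a (b ᵥ* M) := by
  ext i j
  simp only [mul_apply, vecMulVec_apply, vecMul, dotProduct, Finset.mul_sum, mul_assoc]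

lemma mul_vecMulVec (M : Matrix m n R) (a : n → R) (b : o → R) :
    M * vecMulVec a b = vecMulVec (M *ᵥ a) b := by
  ext i j
  simp only [mul_apply, vecMulVec_apply, mulVec, dotProduct, Finset.sum_mul, mul_assoc]

lemma vecMulVec_mul_vecMulVec (a : m → R) (b : n → R) (c : n → R) (d : o → R) :
    vecMulVec a b * vecMulVec c d = (b ⬝ᵥ c) • vecMulVec a d := by
  ext i j
  simp only [mul_apply, vecMulVec_apply, Matrix.smul_apply, dotProduct, Finset.sum_mul, smul_eq_mul,
    Finset.mul_sum]
  rw [Finset.sum_congr rfl]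
  intro k _
  ring

lemma vecMulVec_mulVec (a : m → R) (b : n → R) (x : n → R) :
    vecMulVec a b *ᵥ x = (b ⬝ᵥ x) • a := by
  funext i
  simp only [mulVec, vecMulVec_apply, dotProduct, Pi.smul_apply, smul_eq_mul, mul_assoc,
    ← Finset.mul_sum]
  ring

lemma vecMul_vecMulVec (x : m → R) (a : m → R) (b : n → R) :
    x ᵥ* vecMulVec a b = (x ⬝ᵥ a) • b := by
  funext j
  simp only [vecMul, vecMulVec_apply, dotProduct, Pi.smul_apply, smul_eq_mul]
  rw [Finset.sum_congr rfl (fun k _ => by ring : ∀ k ∈ Finset.univ, x k * (a k * b j) = x k * a k * b j),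
    ← Finset.sum_mul]

section RankPivot

variable {K : Type*} [Field K] {N : Type*} [Fintype N] [DecidableEq N]

/-- Splitting off one pivot: if `S p0 i = 1` then subtracting the outer product of
column `i` and row `p0` drops the rank by exactly one. -/
theorem rank_pivot (S : Matrix N N K) (i p0 : N) (hpiv : S p0 i = 1) :
    S.rank = (S - vecMulVec (fun k => S k i) (fun l => S p0 l)).rank + 1 := by
  classical
  set v : N → K := fun k => S k i with hv
  set T : Matrix N N K := S - vecMulVec v (fun l => S p0 l) with hT
  have hTrow : ∀ l, T p0 l = 0 := by
    intro l
    simp [hT, vecMulVec_apply, hv, hpiv]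
  have hcolT : ∀ l, Tᵀ l = Sᵀ l - S p0 l • v := by
    intro l
    funext k
    simp [hT, vecMulVec_apply]
    ring
  have hvS : v ∈ Submodule.span K (Set.range Sᵀ) :=
    Submodule.subset_span ⟨i, rfl⟩
  -- the span identity
  have hspan : Submodule.span K (Set.range Sᵀ)
      = Submodule.span K (Set.range Tᵀ) ⊔ Submodule.span K {v} := by
    apply le_antisymm
    · rw [Submodule.span_le]
      rintro _ ⟨l, rfl⟩
      have : Sᵀ l = Tᵀ l + S p0 l • v := by rw [hcolT]; abel
      rw [this]
      exact Submodule.add_mem _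
        (Submodule.mem_sup_left (Submodule.subset_span ⟨l, rfl⟩))
        (Submodule.mem_sup_right (Submodule.smul_mem _ _ (Submodule.subset_span rfl)))
    · apply sup_le
      · rw [Submodule.span_le]
        rintro _ ⟨l, rfl⟩
        rw [hcolT]
        exact Submodule.sub_mem _ (Submodule.subset_span ⟨l, rfl⟩)
          (Submodule.smul_mem _ _ hvS)
      · rw [Submodule.span_le, Set.singleton_subset_iff]
        exact hvS
  have hvnot : v ∉ Submodule.span K (Set.range Tᵀ) := by
    intro hmem
    have hker : Submodule.span K (Set.range Tᵀ) ≤ LinearMap.ker (LinearMap.proj (R := K) p0) := by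
      rw [Submodule.span_le]
      rintro _ ⟨l, rfl⟩
      simp [LinearMap.mem_ker, hTrow l]
    have := hker hmem
    simp only [LinearMap.mem_ker, LinearMap.proj_apply] at this
    rw [hv] at this
    simp only [hpiv] at this
    exact one_ne_zero this
  have hv0 : v ≠ 0 := by
    intro h0
    apply hvnot
    rw [h0]
    exact Submodule.zero_mem _
  have hdisj : Submodule.span K (Set.range Tᵀ) ⊓ Submodule.span K {v} = ⊥ := by
    exact Disjoint.eq_bot (Submodule.disjoint_span_singleton.2 (fun hm => absurd hm hvnot))
  rw [Matrix.rank_eq_finrank_span_cols, Matrix.rank_eq_finrank_span_cols]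
  change Module.finrank K (Submodule.span K (Set.range Sᵀ))
    = Module.finrank K (Submodule.span K (Set.range Tᵀ)) + 1
  rw [hspan]
  have hadd := Submodule.finrank_sup_add_finrank_inf_eq
    (Submodule.span K (Set.range Tᵀ)) (Submodule.span K {v})
  rw [hdisj, finrank_bot, add_zero, finrank_span_singleton hv0] at hadd
  exact hadd

end RankPivot

section Parity

variable {N : Type*} [Fintype N] [DecidableEq N]

lemma zmod2_ne_zero {x : ZMod 2} (h : x ≠ 0) : x = 1 := by revert h; revert x; decide

lemma zmod2_mul_self' (a : ZMod 2) : a * a = a := by revert a; decide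

lemma zmod2_sub_eq_add (A B : Matrix N N (ZMod 2)) : A - B = A + B := by
  ext i j
  show A i j - B i j = A i j + B i j
  have : ∀ x y : ZMod 2, x - y = x + y := by decide
  exact this _ _

/-- Parity of the rank of a symmetric matrix over `𝔽₂`:
if `S c = diag S` then `rank S ≡ c ⬝ diag S (mod 2)`. -/
theorem rank_parity_symm (S : Matrix N N (ZMod 2)) (hsym : Sᵀ = S) (c : N → ZMod 2)
    (hc : S *ᵥ c = fun k => S k k) :
    ((S.rank : ZMod 2)) = c ⬝ᵥ (fun k => S k k) := by
  classical
  suffices H : ∀ r (S : Matrix N N (ZMod 2)), S.rank = r → Sᵀ = S →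
      ∀ c : N → ZMod 2, (S *ᵥ c = fun k => S k k) →
      ((S.rank : ZMod 2)) = c ⬝ᵥ (fun k => S k k) from H _ S rfl hsym c hc
  intro r
  induction r using Nat.strong_induction_on with
  | _ r ih =>
    intro S hr hsym c hc
    have hsym' : ∀ a b, S b a = S a b := fun a b => congrFun (congrFun hsym a) b
    by_cases h0 : S = 0
    · subst h0
      simp only [Matrix.rank_zero, Nat.cast_zero]
      have : (fun k => (0 : Matrix N N (ZMod 2)) k k) = (0 : N → ZMod 2) := by
        funext k; rfl
      rw [this, dotProduct_zero]
    by_cases hdiag : ∃ k, S k k = 1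
    · -- case A : a nonzero diagonal entry
      obtain ⟨k, hk⟩ := hdiag
      set v : N → ZMod 2 := fun l => S l k with hv
      have hrowv : (fun l => S k l) = v := funext fun l => hsym' l k
      have hrank := rank_pivot S k k hk
      rw [hrowv, zmod2_sub_eq_add] at hrank
      set T : Matrix N N (ZMod 2) := S + vecMulVec v v with hT
      -- symmetry of T
      have hTsym : Tᵀ = T := by
        rw [hT, Matrix.transpose_add, hsym]
        congr 1
        ext a b
        exact mul_comm _ _
      -- dot products
      have hvc : v ⬝ᵥ c = 1 := by
        have h1 : (S *ᵥ c) k = 1 := by rw [hc]; exact hk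
        rw [← h1]
        simp only [Matrix.mulVec, dotProduct]
        exact Finset.sum_congr rfl fun l _ => by show S l k * c l = S k l * c l; rw [hsym' l k]
      have hcv : c ⬝ᵥ v = 1 := by rw [dotProduct_comm]; exact hvc
      have hvk : v k = 1 := hk
      -- new certificate
      set c' : N → ZMod 2 := c + Pi.single k 1 with hc'
      have hTc : T *ᵥ c' = fun l => T l l := by
        funext l
        have e1 : (T *ᵥ c') l = (S *ᵥ c) l + (S *ᵥ Pi.single k 1) l
            + (vecMulVec v v *ᵥ c) l + (vecMulVec v v *ᵥ Pi.single k 1) l := by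
          rw [hT, hc', Matrix.add_mulVec, Matrix.mulVec_add, Matrix.mulVec_add]
          show (S *ᵥ c) l + (S *ᵥ Pi.single k 1) l
              + ((vecMulVec v v *ᵥ c) l + (vecMulVec v v *ᵥ Pi.single k 1) l) = _
          ring
        rw [e1, vecMulVec_mulVec, vecMulVec_mulVec, hvc, hc]
        have e2 : (S *ᵥ Pi.single k 1) l = v l := by
          simp [Matrix.mulVec_single, hv]
        have e3 : v ⬝ᵥ Pi.single k 1 = 1 := by
          rw [dotProduct_single, mul_one, hvk]
        rw [e2, e3]
        have e4 : T l l = S l l + v l * v l := rfl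
        rw [e4]
        have : ∀ a b : ZMod 2, a + b + (1 : ZMod 2) • b + (1 : ZMod 2) • b = a + b * b := by decide
        exact this (S l l) (v l)
      have hrlt : T.rank < r := by omega
      have hih := ih T.rank (by omega) T rfl hTsym c' hTc
      -- compute c' ⬝ diag T
      have hdot : c' ⬝ᵥ (fun l => T l l) = c ⬝ᵥ (fun l => S l l) + 1 := by
        have hdT : (fun l => T l l) = (fun l => S l l) + v := by
          funext l
          show S l l + v l * v l = S l l + v l
          rw [zmod2_mul_self']
        rw [hdT, hc', add_dotProduct, dotProduct_add, dotProduct_add,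
          single_dotProduct, single_dotProduct, hcv]
        have hdk : (fun l => S l l) k = 1 := hk
        have hvk' : v k = 1 := hvk
        show c ⬝ᵥ (fun l => S l l) + 1 + (1 * (fun l => S l l) k + 1 * v k) = _
        rw [hdk, hvk']
        have : ∀ x : ZMod 2, x + 1 + (1 * 1 + 1 * 1) = x + 1 := by decide
        exact this _
      rw [hrank, Nat.cast_add, Nat.cast_one, hih, hdot]
      have : ∀ x : ZMod 2, x + 1 + 1 = x := by decide
      exact this _
    · -- case B : zero diagonal
      push_neg at hdiag
      have hdiag0 : ∀ k, S k k = 0 := by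
        intro k
        by_contra hne
        exact hdiag k (zmod2_ne_zero hne)
      obtain ⟨i, j, hij⟩ : ∃ i j, S i j ≠ 0 := by
        by_contra hno
        push_neg at hno
        exact h0 (by ext i j; exact hno i j)
      have hij1 : S i j = 1 := zmod2_ne_zero hij
      have hne : i ≠ j := fun he => by rw [he] at hij1; rw [hdiag0 j] at hij1; exact one_ne_zero hij1.symm
      set u : N → ZMod 2 := fun l => S l i with hu
      set w : N → ZMod 2 := fun l => S l j with hw
      have hji1 : S j i = 1 := by rw [hsym' i j]; exact hij1
      have hrank1 := rank_pivot S i j hji1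
      have hrowj : (fun l => S j l) = w := funext fun l => hsym' l j
      rw [hrowj, zmod2_sub_eq_add] at hrank1
      set T1 : Matrix N N (ZMod 2) := S + vecMulVec u w with hT1
      have hT1ij : T1 i j = 1 := by
        show S i j + u i * w j = 1
        rw [hij1, hu]
        simp only [hdiag0 i]
        rw [zero_mul, add_zero]
      have hrank2 := rank_pivot T1 j i hT1ij
      have hcolj : (fun k1 => T1 k1 j) = w := by
        funext k1
        show S k1 j + u k1 * w j = w k1
        rw [hw]
        simp only [hdiag0 j]
        rw [mul_zero, add_zero]
      have hrowi : (fun l => T1 i l) = u := by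
        funext l
        show S i l + u i * w l = u l
        rw [hu]
        simp only [hdiag0 i]
        rw [zero_mul, add_zero]
        exact hsym' l i ▸ rfl
      rw [hcolj, hrowi, zmod2_sub_eq_add] at hrank2
      set T2 : Matrix N N (ZMod 2) := T1 + vecMulVec w u with hT2
      have hT2sym : T2ᵀ = T2 := by
        rw [hT2, hT1, Matrix.transpose_add, Matrix.transpose_add, hsym]
        have h1 : (vecMulVec u w)ᵀ = vecMulVec w u := by
          ext a b; exact mul_comm _ _
        have h2 : (vecMulVec w u)ᵀ = vecMulVec u w := by
          ext a b; exact mul_comm _ _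
        rw [h1, h2]
        show S + vecMulVec w u + vecMulVec u w = S + vecMulVec u w + vecMulVec w u
        rw [add_assoc, add_assoc, add_comm (vecMulVec w u)]
      have hdiagT2 : ∀ l, T2 l l = 0 := by
        intro l
        show S l l + u l * w l + w l * u l = 0
        rw [hdiag0 l, mul_comm (w l)]
        have : ∀ x : ZMod 2, (0 : ZMod 2) + x + x = 0 := by decide
        exact this _
      have hc2 : T2 *ᵥ (0 : N → ZMod 2) = fun l => T2 l l := by
        funext l
        rw [Matrix.mulVec_zero]
        exact (hdiagT2 l).symm
      have hih := ih T2.rank (by omega) T2 rfl hT2sym 0 hc2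
      have hd0 : (fun k => S k k) = (0 : N → ZMod 2) := funext hdiag0
      rw [hd0, dotProduct_zero]
      rw [hrank1, hrank2, Nat.cast_add, Nat.cast_add, Nat.cast_one, hih]
      rw [zero_dotProduct]
      decide

end Parity

end MonskyAux2

/-! ### Part D : the reduction of the Monsky matrix -/

/-- Top-left 6×6 scalar block of the Monsky matrix `A₁`, with `e3 = [-3/ñ]`. -/
def scalarBlockA1 (e3 : ZMod 2) : Matrix (Fin 6) (Fin 6) (ZMod 2) :=
  !![1,0,0,1,0,0;
     0,1,0,1,0,1;
     0,0,0,0,1,0;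
     1,1,1,0,0,1;
     1,1,0,0,0,1+e3;
     0,0,1,0,0,0]

/-- The full Monsky matrix `A₁` for `n = ñ = p₁⋯p_t ≡ 1 (mod 8)`, in block form
with index set `Fin 6 ⊕ Fin t ⊕ Fin t` (6 scalar coordinates, then the
`y`-coordinates, then the `x`-coordinates). -/
def monskyA1 {t : ℕ} (p : Fin t → ℕ) :
    Matrix (Fin 6 ⊕ Fin t ⊕ Fin t) (Fin 6 ⊕ Fin t ⊕ Fin t) (ZMod 2) :=
  fun i j =>
    match i, j with
    | Sum.inl i, Sum.inl j => scalarBlockA1 (addLeg (-3) (∏ k, p k)) i j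
    | Sum.inl i, Sum.inr (Sum.inl j) =>
        if i = 3 then rvec p (-1) j else if i = 4 then rvec p (-3) j else 0
    | Sum.inl i, Sum.inr (Sum.inr j) =>
        if i = 1 then rvec p (-1) j else if i = 3 then rvec p 2 j else 0
    | Sum.inr (Sum.inl i), Sum.inl j =>
        if j = 3 then rvec p (-1) i else if j = 4 then rvec p 2 i
        else if j = 5 then rvec p 3 i else 0
    | Sum.inr (Sum.inl i), Sum.inr (Sum.inl j) =>
        Matrix.diagonal (rvec p (-3)) i j
    | Sum.inr (Sum.inl i), Sum.inr (Sum.inr j) => redeiMatrix p i j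
    | Sum.inr (Sum.inr i), Sum.inl j =>
        if j = 0 then rvec p (-1) i else if j = 1 then rvec p 2 i
        else if j = 2 then rvec p 3 i else 0
    | Sum.inr (Sum.inr i), Sum.inr (Sum.inl j) =>
        (redeiMatrix p + Matrix.diagonal (rvec p (-1))) i j
    | Sum.inr (Sum.inr _), Sum.inr (Sum.inr _) => 0

namespace MonskyD
open MonskyAux MonskyAux2

lemma elim_add {α : Type*} [Add α] {m n : Type*} (a c : m → α) (b d : n → α) :
    Sum.elim a b + Sum.elim c d = Sum.elim (a + c) (b + d) := by
  funext x
  rcases x with x | x <;> rfl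

section VMV

variable {R : Type*} [CommRing R] {m n : Type*}

lemma add_vecMulVec (a b : m → R) (c : n → R) :
    vecMulVec (a + b) c = vecMulVec a c + vecMulVec b c := by
  ext i j
  show (a i + b i) * c j = a i * c j + b i * c j
  ring

lemma vecMulVec_add (a : m → R) (b c : n → R) :
    vecMulVec a (b + c) = vecMulVec a b + vecMulVec a c := by
  ext i j
  show a i * (b j + c j) = a i * b j + a i * c j
  ring

lemma vecMulVec_smul (a : m → R) (e : R) (b : n → R) :
    vecMulVec a (e • b) = e • vecMulVec a b := by
  ext i j
  show a i * (e * b j) = e * (a i * b j)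
  ring

lemma vecMulVec_zero_right (a : m → R) : vecMulVec a (0 : n → R) = 0 := by
  ext i j
  exact mul_zero _

lemma zero_vecMulVec (b : n → R) : vecMulVec (0 : m → R) b = 0 := by
  ext i j
  exact zero_mul _

lemma vecMulVec_transpose (a : m → R) (b : n → R) :
    (vecMulVec a b)ᵀ = vecMulVec b a := by
  ext i j
  exact mul_comm _ _

end VMV

def F2 := ZMod 2

def E6 (k : Fin 6) : Fin 6 → ZMod 2 := Pi.single k 1

def onev {t : ℕ} : Fin t → ZMod 2 := fun _ => 1

lemma dot_onev {t : ℕ} (v : Fin t → ZMod 2) : v ⬝ᵥ onev = ∑ i, v i := by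
  simp [dotProduct, onev]

lemma onev_dot {t : ℕ} (v : Fin t → ZMod 2) : onev ⬝ᵥ v = ∑ i, v i := by
  simp [dotProduct, onev]

def C6 : Matrix (Fin 6) (Fin 6) (ZMod 2) :=
  !![1,0,0,0,0,0; 0,1,0,0,0,0; 0,0,1,0,0,0; 1,1,0,1,0,1; 1,1,0,0,1,0; 0,0,0,0,0,1]

def D6 : Matrix (Fin 6) (Fin 6) (ZMod 2) :=
  !![1,0,0,1,1,0; 0,1,0,1,0,0; 0,0,0,0,0,1; 0,0,0,1,1,0; 0,0,1,0,0,0; 0,0,0,0,1,0]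

def D6i : Matrix (Fin 6) (Fin 6) (ZMod 2) :=
  !![1,0,0,1,0,0; 0,1,0,1,0,1; 0,0,0,0,1,0; 0,0,0,1,0,1; 0,0,0,0,0,1; 0,0,1,0,0,0]

def P6 : Matrix (Fin 6) (Fin 6) (ZMod 2) :=
  !![1,0,0,1,0,0; 0,1,0,1,0,1; 0,0,0,0,1,0; 0,0,0,0,0,0; 0,0,0,0,0,0; 0,0,1,0,0,0]

def W6 : Matrix (Fin 6) (Fin 6) (ZMod 2) :=
  !![1,0,0,0,0,0; 0,1,0,0,0,0; 0,0,1,0,0,0; 0,0,0,0,0,0; 0,0,0,0,0,0; 0,0,0,0,0,1]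

def c6v : Fin 6 → ZMod 2 := ![1,1,1,0,0,1]

section TheMatrices

variable {t : ℕ} (p : Fin t → ℕ)

def MsW : Matrix (Fin 6) (Fin t ⊕ Fin t) (ZMod 2) :=
  vecMulVec (E6 3) (Sum.elim (rvec p (-1)) (rvec p 2))
    + vecMulVec (E6 4) (Sum.elim (rvec p (-3)) 0)
    + vecMulVec (E6 1) (Sum.elim 0 (rvec p (-1)))

def MWs : Matrix (Fin t ⊕ Fin t) (Fin 6) (ZMod 2) :=
  vecMulVec (Sum.elim (rvec p (-1)) 0) (E6 3) + vecMulVec (Sum.elim (rvec p 2) 0) (E6 4)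
    + vecMulVec (Sum.elim (rvec p 3) 0) (E6 5) + vecMulVec (Sum.elim 0 (rvec p (-1))) (E6 0)
    + vecMulVec (Sum.elim 0 (rvec p 2)) (E6 1) + vecMulVec (Sum.elim 0 (rvec p 3)) (E6 2)

def MWW : Matrix (Fin t ⊕ Fin t) (Fin t ⊕ Fin t) (ZMod 2) :=
  fromBlocks (diagonal (rvec p (-3))) (redeiMatrix p)
    (redeiMatrix p + diagonal (rvec p (-1))) 0

def UWb : Matrix (Fin t ⊕ Fin t) (Fin t ⊕ Fin t) (ZMod 2) := fromBlocks 1 1 1 0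

def UWi : Matrix (Fin t ⊕ Fin t) (Fin t ⊕ Fin t) (ZMod 2) := fromBlocks 0 1 1 1

def Umat : Matrix (Fin 6 ⊕ Fin t ⊕ Fin t) (Fin 6 ⊕ Fin t ⊕ Fin t) (ZMod 2) :=
  fromBlocks C6 (vecMulVec (E6 4) (Sum.elim onev 0))
    (vecMulVec (Sum.elim (rvec p (-1)) 0) (E6 0) + vecMulVec (Sum.elim (rvec p 2) 0) (E6 1)
      + vecMulVec (Sum.elim (rvec p 2) (rvec p 2)) (E6 2)
      + vecMulVec (Sum.elim (rvec p 3) 0) (E6 5)) UWb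

def Uinv : Matrix (Fin 6 ⊕ Fin t ⊕ Fin t) (Fin 6 ⊕ Fin t ⊕ Fin t) (ZMod 2) :=
  fromBlocks C6 (vecMulVec (E6 4) (Sum.elim 0 onev))
    (vecMulVec (Sum.elim 0 (rvec p (-1))) (E6 0) + vecMulVec (Sum.elim 0 (rvec p 2)) (E6 1)
      + vecMulVec (Sum.elim (rvec p 2) 0) (E6 2)
      + vecMulVec (Sum.elim 0 (rvec p 3)) (E6 5)) UWi

def Vmat : Matrix (Fin 6 ⊕ Fin t ⊕ Fin t) (Fin 6 ⊕ Fin t ⊕ Fin t) (ZMod 2) :=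
  fromBlocks D6 (vecMulVec (E6 0) (Sum.elim (rvec p (-1)) 0)
      + vecMulVec (E6 3) (Sum.elim (rvec p (-1)) 0))
    (vecMulVec (Sum.elim onev 0) (E6 4)) UWb

def Vinv : Matrix (Fin 6 ⊕ Fin t ⊕ Fin t) (Fin 6 ⊕ Fin t ⊕ Fin t) (ZMod 2) :=
  fromBlocks D6i (vecMulVec (E6 1) (Sum.elim 0 (rvec p (-1)))
      + vecMulVec (E6 3) (Sum.elim 0 (rvec p (-1))))
    (vecMulVec (Sum.elim 0 onev) (E6 5)) UWi

def PsW : Matrix (Fin 6) (Fin t ⊕ Fin t) (ZMod 2) :=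
  vecMulVec (E6 3) (Sum.elim (rvec p (-1)) (rvec p (-1) + rvec p 2))
    + vecMulVec (E6 1) (Sum.elim 0 (rvec p (-1)))

def PWs : Matrix (Fin t ⊕ Fin t) (Fin 6) (ZMod 2) :=
  vecMulVec (Sum.elim (rvec p 2) (rvec p (-1))) (E6 3)
    + vecMulVec (Sum.elim (rvec p 2 + rvec p 3) (rvec p 3)) (E6 5)

def PWW : Matrix (Fin t ⊕ Fin t) (Fin t ⊕ Fin t) (ZMod 2) :=
  fromBlocks (redeiMatrix p + diagonal (rvec p 3))
    (redeiMatrix p + vecMulVec (rvec p 2) (rvec p (-1)))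
    (diagonal (rvec p (-3))) (redeiMatrix p)

def Pmat : Matrix (Fin 6 ⊕ Fin t ⊕ Fin t) (Fin 6 ⊕ Fin t ⊕ Fin t) (ZMod 2) :=
  fromBlocks P6 (PsW p) (PWs p) (PWW p)

def WsW : Matrix (Fin 6) (Fin t ⊕ Fin t) (ZMod 2) :=
  vecMulVec (E6 3) (Sum.elim (rvec p 2) (rvec p (-1)))

def WWs : Matrix (Fin t ⊕ Fin t) (Fin 6) (ZMod 2) :=
  vecMulVec (Sum.elim (rvec p 2) (rvec p (-1))) (E6 3)

def WWW : Matrix (Fin t ⊕ Fin t) (Fin t ⊕ Fin t) (ZMod 2) :=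
  fromBlocks (diagonal (rvec p 3)) (redeiMatrix p + diagonal (rvec p 3))
    ((redeiMatrix p)ᵀ + diagonal (rvec p 3)) (diagonal (rvec p (-3)))

def Wmat : Matrix (Fin 6 ⊕ Fin t ⊕ Fin t) (Fin 6 ⊕ Fin t ⊕ Fin t) (ZMod 2) :=
  fromBlocks W6 (WsW p) (WWs p) (WWW p)

lemma monsky_blocks :
    monskyA1 p = fromBlocks (scalarBlockA1 (addLeg (-3) (∏ k, p k)))
      (MsW p) (MWs p) (MWW p) := by
  ext i j
  rcases i with i | i | i <;> rcases j with j | j | j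
  · rfl
  · show (if i = 3 then rvec p (-1) j else if i = 4 then rvec p (-3) j else 0) = MsW p i (Sum.inl j)
    simp only [MsW, Matrix.add_apply, vecMulVec_apply, Sum.elim_inl, E6, Pi.single_apply, Pi.zero_apply]
    fin_cases i <;> simp
  · show (if i = 1 then rvec p (-1) j else if i = 3 then rvec p 2 j else 0) = MsW p i (Sum.inr j)
    simp only [MsW, Matrix.add_apply, vecMulVec_apply, Sum.elim_inr, E6, Pi.single_apply, Pi.zero_apply]
    fin_cases i <;> simp
  · show (if j = 3 then rvec p (-1) i else if j = 4 then rvec p 2 i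
        else if j = 5 then rvec p 3 i else 0) = MWs p (Sum.inl i) j
    simp only [MWs, Matrix.add_apply, vecMulVec_apply, Sum.elim_inl, E6, Pi.single_apply, Pi.zero_apply]
    fin_cases j <;> simp
  · rfl
  · rfl
  · show (if j = 0 then rvec p (-1) i else if j = 1 then rvec p 2 i
        else if j = 2 then rvec p 3 i else 0) = MWs p (Sum.inr i) j
    simp only [MWs, Matrix.add_apply, vecMulVec_apply, Sum.elim_inr, E6, Pi.single_apply, Pi.zero_apply]
    fin_cases j <;> simp
  · rfl
  · rfl

lemma zmod2_two : (2 : ZMod 2) = 0 := rfl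

lemma fromBlocks_eq {α l m n o : Type*} [Zero α]
    {A A' : Matrix n l α} {B B' : Matrix n m α} {C C' : Matrix o l α} {D D' : Matrix o m α}
    (h1 : A = A') (h2 : B = B') (h3 : C = C') (h4 : D = D') :
    fromBlocks A B C D = fromBlocks A' B' C' D' := by
  rw [h1, h2, h3, h4]

lemma sb_split : ∀ e : ZMod 2,
    scalarBlockA1 e = scalarBlockA1 0 + vecMulVec (E6 4) (e • E6 5) := by decide

lemma vecMulVec_elim {t : ℕ} (a b : Fin t → ZMod 2) (c d : Fin t → ZMod 2) :
    vecMulVec (Sum.elim a b) (Sum.elim c d)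
      = fromBlocks (vecMulVec a c) (vecMulVec a d) (vecMulVec b c) (vecMulVec b d) := by
  ext i j
  rcases i with i | i <;> rcases j with j | j <;> rfl

lemma E6_dot : ∀ k k' : Fin 6, E6 k ⬝ᵥ E6 k' = if k = k' then 1 else 0 := by decide

lemma UWb_mulVec (a b : Fin t → ZMod 2) :
    (UWb : Matrix (Fin t ⊕ Fin t) (Fin t ⊕ Fin t) (ZMod 2)) *ᵥ Sum.elim a b
      = Sum.elim (a + b) a := by
  rw [UWb, fromBlocks_mulVec, Sum.elim_comp_inl, Sum.elim_comp_inr]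
  simp [Matrix.one_mulVec, Matrix.zero_mulVec]

lemma UWi_mulVec (a b : Fin t → ZMod 2) :
    (UWi : Matrix (Fin t ⊕ Fin t) (Fin t ⊕ Fin t) (ZMod 2)) *ᵥ Sum.elim a b
      = Sum.elim b (a + b) := by
  rw [UWi, fromBlocks_mulVec, Sum.elim_comp_inl, Sum.elim_comp_inr]
  simp [Matrix.one_mulVec, Matrix.zero_mulVec]

lemma vecMul_UWb (a b : Fin t → ZMod 2) :
    (Sum.elim a b) ᵥ* (UWb : Matrix (Fin t ⊕ Fin t) (Fin t ⊕ Fin t) (ZMod 2))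
      = Sum.elim (a + b) a := by
  rw [UWb, vecMul_fromBlocks, Sum.elim_comp_inl, Sum.elim_comp_inr]
  simp [Matrix.vecMul_one, Matrix.vecMul_zero]

lemma vecMul_UWi (a b : Fin t → ZMod 2) :
    (Sum.elim a b) ᵥ* (UWi : Matrix (Fin t ⊕ Fin t) (Fin t ⊕ Fin t) (ZMod 2))
      = Sum.elim b (a + b) := by
  rw [UWi, vecMul_fromBlocks, Sum.elim_comp_inl, Sum.elim_comp_inr]
  simp [Matrix.vecMul_one, Matrix.vecMul_zero]

lemma onev_vecMul_diag (v : Fin t → ZMod 2) :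
    (onev : Fin t → ZMod 2) ᵥ* diagonal v = v := by
  funext i
  rw [Matrix.vecMul_diagonal]
  exact one_mul _

lemma diag_mulVec_onev (v : Fin t → ZMod 2) :
    diagonal v *ᵥ (onev : Fin t → ZMod 2) = v := by
  funext i
  rw [Matrix.mulVec_diagonal]
  exact mul_one _

section Products

variable (hp : ∀ i, (p i).Prime) (hinj : Function.Injective p)
  (h2 : ∀ i, p i ≠ 2) (h3 : ∀ i, p i ≠ 3) (h8 : (∏ k, p k) % 8 = 1)

include hp h2 h3 h8 in
lemma gam_eq : rvec p 3 = rvec p (-3) + rvec p (-1) := by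
  have hd := delta_eq p hp h2 h3
  funext i
  have h' := congrFun hd i
  show rvec p 3 i = rvec p (-3) i + rvec p (-1) i
  rw [h']
  show rvec p 3 i = rvec p (-1) i + rvec p 3 i + rvec p (-1) i
  generalize rvec p (-1) i = a
  generalize rvec p 3 i = b
  ring_nf
  rw [zmod2_two]
  ring

include hp hinj h2 h8 in
lemma onev_vecMul_redei : (onev : Fin t → ZMod 2) ᵥ* redeiMatrix p = rvec p (-1) :=
  redei_vecMul_one p hp hinj h2 h8

lemma redei_mulVec_onev : redeiMatrix p *ᵥ (onev : Fin t → ZMod 2) = 0 :=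
  redei_mulVec_one p

include hp hinj h2 h8 in
lemma vecMul_MWW : (Sum.elim onev 0 : Fin t ⊕ Fin t → ZMod 2) ᵥ* MWW p
    = Sum.elim (rvec p (-3)) (rvec p (-1)) := by
  rw [MWW, vecMul_fromBlocks, Sum.elim_comp_inl, Sum.elim_comp_inr, Matrix.zero_vecMul,
    Matrix.zero_vecMul, add_zero, add_zero, onev_vecMul_diag, onev_vecMul_redei p hp hinj h2 h8]

include hp h2 h3 h8 in
lemma UWb_mul_MWW : (UWb : Matrix (Fin t ⊕ Fin t) (Fin t ⊕ Fin t) (ZMod 2)) * MWW p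
    = fromBlocks (redeiMatrix p + diagonal (rvec p 3)) (redeiMatrix p)
        (diagonal (rvec p (-3))) (redeiMatrix p) := by
  rw [UWb, MWW, fromBlocks_multiply]
  refine fromBlocks_eq ?_ ?_ ?_ ?_
  · rw [Matrix.one_mul, Matrix.one_mul, gam_eq p hp h2 h3 h8]
    ext i j
    by_cases h : i = j
    · subst h
      simp only [Matrix.add_apply, diagonal_apply_eq, Pi.add_apply]
      ring
    · simp only [Matrix.add_apply, diagonal_apply_ne _ h]
      ring
  · rw [Matrix.one_mul, Matrix.mul_zero, add_zero]
  · rw [Matrix.one_mul, Matrix.zero_mul, add_zero]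
  · rw [Matrix.one_mul, Matrix.zero_mul, add_zero]

include hp hinj h2 h3 h8 in
lemma U_mul_M : Umat p * monskyA1 p = Pmat p := by
  rw [monsky_blocks p, Umat, Pmat, fromBlocks_multiply]
  refine fromBlocks_eq ?_ ?_ ?_ ?_
  · -- scalar block
    rw [sb_split, Matrix.mul_add, MonskyAux2.mul_vecMulVec]
    have hc64 : C6 *ᵥ E6 4 = E6 4 := by decide
    have hc60 : C6 * scalarBlockA1 0 = P6 := by decide
    rw [hc64, hc60, MWs]
    simp only [Matrix.mul_add, MonskyAux2.vecMulVec_mul_vecMulVec, sumElim_dotProduct_sumElim,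
      dotProduct_zero, zero_dotProduct, add_zero, zero_add, onev_dot]
    rw [sum_eps p hp h2 h8, sum_beta p hp h2 h8, sum_gam p hp h2 h3 h8]
    simp only [zero_smul, add_zero, zero_add, vecMulVec_smul]
    ext i j
    fin_cases i <;> fin_cases j <;>
      simp [P6, E6, Pi.single_apply, vecMulVec_apply] <;> ring_nf <;>
      simp [zmod2_two]
  · -- sW block
    rw [MsW, PsW]
    simp only [Matrix.mul_add, MonskyAux2.mul_vecMulVec, MonskyAux2.vecMulVec_mul]
    have hc63 : C6 *ᵥ E6 3 = E6 3 := by decide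
    have hc64 : C6 *ᵥ E6 4 = E6 4 := by decide
    have hc61 : C6 *ᵥ E6 1 = E6 1 + E6 3 + E6 4 := by decide
    rw [hc63, hc64, hc61, vecMul_MWW p hp hinj h2 h8]
    ext i j
    rcases j with j | j <;> fin_cases i <;>
      simp [E6, Pi.single_apply, vecMulVec_apply, add_vecMulVec] <;> ring_nf <;>
      simp [zmod2_two] <;> try ring
  · -- Ws block
    rw [MWs, PWs]
    simp only [Matrix.add_mul, Matrix.mul_add, MonskyAux2.mul_vecMulVec, MonskyAux2.vecMulVec_mul]
    have hr0 : ∀ e : ZMod 2, (E6 0) ᵥ* scalarBlockA1 e = E6 0 + E6 3 := by decide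
    have hr1 : ∀ e : ZMod 2, (E6 1) ᵥ* scalarBlockA1 e = E6 1 + E6 3 + E6 5 := by decide
    have hr2 : ∀ e : ZMod 2, (E6 2) ᵥ* scalarBlockA1 e = E6 4 := by decide
    have hr5 : ∀ e : ZMod 2, (E6 5) ᵥ* scalarBlockA1 e = E6 2 := by decide
    rw [hr0, hr1, hr2, hr5]
    rw [UWb_mulVec, UWb_mulVec, UWb_mulVec, UWb_mulVec, UWb_mulVec, UWb_mulVec]
    ext i j
    rcases i with i | i <;> fin_cases j <;>
      simp [E6, Pi.single_apply, vecMulVec_apply, vecMulVec_add] <;> ring_nf <;>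
      simp [zmod2_two] <;> try ring
  · -- WW block
    rw [MsW]
    have d03 : E6 0 ⬝ᵥ E6 3 = 0 := by decide
    have d04 : E6 0 ⬝ᵥ E6 4 = 0 := by decide
    have d01 : E6 0 ⬝ᵥ E6 1 = 0 := by decide
    have d13 : E6 1 ⬝ᵥ E6 3 = 0 := by decide
    have d14 : E6 1 ⬝ᵥ E6 4 = 0 := by decide
    have d11 : E6 1 ⬝ᵥ E6 1 = 1 := by decide
    have d23 : E6 2 ⬝ᵥ E6 3 = 0 := by decide
    have d24 : E6 2 ⬝ᵥ E6 4 = 0 := by decide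
    have d21 : E6 2 ⬝ᵥ E6 1 = 0 := by decide
    have d53 : E6 5 ⬝ᵥ E6 3 = 0 := by decide
    have d54 : E6 5 ⬝ᵥ E6 4 = 0 := by decide
    have d51 : E6 5 ⬝ᵥ E6 1 = 0 := by decide
    simp only [Matrix.mul_add, Matrix.add_mul, MonskyAux2.vecMulVec_mul_vecMulVec, d03, d04, d01, d13,
      d14, d11, d23, d24, d21, d53, d54, d51, zero_smul, one_smul, zero_add, add_zero]
    rw [UWb_mul_MWW p hp h2 h3 h8, PWW]
    rw [vecMulVec_elim, fromBlocks_add]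
    refine fromBlocks_eq ?_ ?_ ?_ ?_
    · rw [vecMulVec_zero_right, zero_add]
    · rw [add_comm]
    · rw [zero_vecMulVec, zero_add]
    · rw [zero_vecMulVec, zero_add]

lemma mat_add_self {m' n' : Type*} (X : Matrix m' n' (ZMod 2)) : X + X = 0 := by
  ext i j
  exact MonskyAux.zmod2_add_self _

include hp h2 h3 h8 in
lemma PWW_mulVec_onev : PWW p *ᵥ (Sum.elim onev 0 : Fin t ⊕ Fin t → ZMod 2)
    = Sum.elim (rvec p 3) (rvec p (-3)) := by
  rw [PWW, fromBlocks_mulVec, Sum.elim_comp_inl, Sum.elim_comp_inr, Matrix.mulVec_zero,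
    Matrix.mulVec_zero, add_zero, add_zero, Matrix.add_mulVec, redei_mulVec_onev,
    diag_mulVec_onev, zero_add, diag_mulVec_onev]

include hp hinj h2 h3 h8 in
lemma P_mul_V : Pmat p * Vmat p = Wmat p := by
  rw [Pmat, Vmat, Wmat, fromBlocks_multiply]
  refine fromBlocks_eq ?_ ?_ ?_ ?_
  · -- ss block
    rw [PsW]
    have hD : P6 * D6 = W6 := by decide
    simp only [Matrix.add_mul, MonskyAux2.vecMulVec_mul_vecMulVec, sumElim_dotProduct_sumElim,
      zero_dotProduct, dotProduct_zero, dot_onev, add_zero, zero_add]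
    rw [sum_eps p hp h2 h8, hD]
    simp only [zero_smul, add_zero]
  · -- sW block
    rw [PsW, WsW]
    simp only [Matrix.mul_add, Matrix.add_mul, MonskyAux2.mul_vecMulVec, MonskyAux2.vecMulVec_mul, vecMul_UWb]
    have hp0 : P6 *ᵥ E6 0 = E6 0 := by decide
    have hp3 : P6 *ᵥ E6 3 = E6 0 + E6 1 := by decide
    rw [hp0, hp3]
    ext i j
    rcases j with j | j <;> fin_cases i <;>
      simp [E6, Pi.single_apply, vecMulVec_apply, add_vecMulVec] <;> ring_nf <;>
      simp [zmod2_two] <;> try ring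
  · -- Ws block
    rw [PWs, WWs]
    simp only [Matrix.add_mul, MonskyAux2.vecMulVec_mul, MonskyAux2.mul_vecMulVec]
    have hr3 : (E6 3) ᵥ* D6 = E6 3 + E6 4 := by decide
    have hr5 : (E6 5) ᵥ* D6 = E6 4 := by decide
    rw [hr3, hr5, PWW_mulVec_onev p hp h2 h3 h8, delta_eq p hp h2 h3]
    ext i j
    rcases i with i | i <;> fin_cases j <;>
      simp [E6, Pi.single_apply, vecMulVec_apply, vecMulVec_add] <;> ring_nf <;>
      simp [zmod2_two] <;> try ring
  · -- WW block
    rw [PWs, WWW]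
    have e30 : E6 3 ⬝ᵥ E6 0 = 1 - 1 := by decide
    have e33 : E6 3 ⬝ᵥ E6 3 = 1 := by decide
    have e50 : E6 5 ⬝ᵥ E6 0 = 1 - 1 := by decide
    have e53 : E6 5 ⬝ᵥ E6 3 = 1 - 1 := by decide
    have hz : (1 - 1 : ZMod 2) = 0 := by decide
    simp only [Matrix.mul_add, Matrix.add_mul, MonskyAux2.vecMulVec_mul_vecMulVec, e30, e33, e50, e53,
      hz, zero_smul, one_smul, add_zero, zero_add]
    rw [PWW, UWb, fromBlocks_multiply, vecMulVec_elim, fromBlocks_add]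
    refine fromBlocks_eq ?_ ?_ ?_ ?_
    · rw [Matrix.mul_one, Matrix.mul_one]
      ext i j
      by_cases h : i = j
      · subst h
        simp only [Matrix.add_apply, vecMulVec_apply, diagonal_apply_eq]
        generalize redeiMatrix p i i = A0
        generalize rvec p 2 i = b
        generalize rvec p (-1) i = e
        generalize rvec p 3 i = g
        ring_nf
        rw [zmod2_two]
        ring
      · simp only [Matrix.add_apply, vecMulVec_apply, diagonal_apply_ne _ h]
        generalize redeiMatrix p i j = A0
        generalize rvec p 2 i = b
        generalize rvec p (-1) j = e
        ring_nf
        rw [zmod2_two]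
        ring
    · rw [Matrix.mul_one, Matrix.mul_zero, add_zero, vecMulVec_zero_right, zero_add]
    · rw [Matrix.mul_one, Matrix.mul_one, redei_transpose p hp hinj h2,
        delta_eq p hp h2 h3]
      ext i j
      by_cases h : i = j
      · subst h
        simp only [Matrix.add_apply, vecMulVec_apply, diagonal_apply_eq, Pi.add_apply]
        ring_nf
        try rw [zmod2_two]
        try ring
      · simp only [Matrix.add_apply, vecMulVec_apply, diagonal_apply_ne _ h]
        ring_nf
        try rw [zmod2_two]
        try ring
    · rw [Matrix.mul_one, Matrix.mul_zero, add_zero, vecMulVec_zero_right, zero_add]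

include hp h2 h8 in
lemma U_mul_Uinv : Umat p * Uinv p = 1 := by
  rw [Umat, Uinv, fromBlocks_multiply, ← fromBlocks_one]
  refine fromBlocks_eq ?_ ?_ ?_ ?_
  · have hC : C6 * C6 = 1 := by decide
    simp only [Matrix.mul_add, MonskyAux2.vecMulVec_mul_vecMulVec, sumElim_dotProduct_sumElim,
      zero_dotProduct, dotProduct_zero, onev_dot, add_zero, zero_add]
    rw [sum_beta p hp h2 h8, hC]
    simp only [zero_smul, add_zero]
  · have hc64 : C6 *ᵥ E6 4 = E6 4 := by decide
    rw [MonskyAux2.mul_vecMulVec, hc64, MonskyAux2.vecMulVec_mul, vecMul_UWi]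
    simp only [add_zero]
    exact mat_add_self _
  · simp only [Matrix.add_mul, Matrix.mul_add, MonskyAux2.vecMulVec_mul, MonskyAux2.mul_vecMulVec, UWb_mulVec]
    have hr0 : (E6 0) ᵥ* C6 = E6 0 := by decide
    have hr1 : (E6 1) ᵥ* C6 = E6 1 := by decide
    have hr2 : (E6 2) ᵥ* C6 = E6 2 := by decide
    have hr5 : (E6 5) ᵥ* C6 = E6 5 := by decide
    rw [hr0, hr1, hr2, hr5]
    ext i j
    rcases i with i | i <;> fin_cases j <;>
      simp [E6, Pi.single_apply, vecMulVec_apply] <;> ring_nf <;>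
      simp [zmod2_two] <;> try ring
  · have e04 : ∀ k : Fin 6, k ≠ 4 → E6 k ⬝ᵥ E6 4 = 0 := by decide
    simp only [Matrix.add_mul, MonskyAux2.vecMulVec_mul_vecMulVec,
      e04 0 (by decide), e04 1 (by decide), e04 2 (by decide), e04 5 (by decide),
      zero_smul, add_zero, zero_add]
    rw [UWb, UWi, fromBlocks_multiply, ← fromBlocks_one]
    refine fromBlocks_eq ?_ ?_ ?_ ?_
    · simp
    · exact mat_add_self _
    · simp
    · simp

lemma V_mul_Vinv : Vmat p * Vinv p = 1 := by
  rw [Vmat, Vinv, fromBlocks_multiply, ← fromBlocks_one]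
  refine fromBlocks_eq ?_ ?_ ?_ ?_
  · have hD : D6 * D6i = 1 := by decide
    simp only [Matrix.add_mul, Matrix.mul_add, MonskyAux2.vecMulVec_mul_vecMulVec,
      sumElim_dotProduct_sumElim, zero_dotProduct, dotProduct_zero,
      add_zero, zero_add, zero_smul]
    rw [hD]
  · simp only [Matrix.mul_add, Matrix.add_mul, MonskyAux2.mul_vecMulVec, MonskyAux2.vecMulVec_mul, vecMul_UWi]
    have hd1 : D6 *ᵥ E6 1 = E6 1 := by decide
    have hd3 : D6 *ᵥ E6 3 = E6 0 + E6 1 + E6 3 := by decide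
    rw [hd1, hd3]
    ext i j
    rcases j with j | j <;> fin_cases i <;>
      simp [E6, Pi.single_apply, vecMulVec_apply, add_vecMulVec] <;> ring_nf <;>
      simp [zmod2_two] <;> try ring
  · simp only [Matrix.mul_add, Matrix.add_mul, MonskyAux2.vecMulVec_mul, MonskyAux2.mul_vecMulVec, UWb_mulVec]
    have hr4 : (E6 4) ᵥ* D6i = E6 5 := by decide
    rw [hr4]
    ext i j
    rcases i with i | i <;> fin_cases j <;>
      simp [E6, Pi.single_apply, vecMulVec_apply] <;> ring_nf <;>
      simp [zmod2_two] <;> try ring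
  · have e41 : E6 4 ⬝ᵥ E6 1 = 1 - 1 := by decide
    have e43 : E6 4 ⬝ᵥ E6 3 = 1 - 1 := by decide
    have hz : (1 - 1 : ZMod 2) = 0 := by decide
    simp only [Matrix.mul_add, MonskyAux2.vecMulVec_mul_vecMulVec, e41, e43, hz, zero_smul, add_zero,
      zero_add]
    rw [UWb, UWi, fromBlocks_multiply, ← fromBlocks_one]
    refine fromBlocks_eq ?_ ?_ ?_ ?_
    · simp
    · exact mat_add_self _
    · simp
    · simp

end Products

end TheMatrices


section Final

variable {t : ℕ} (p : Fin t → ℕ)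
  (hp : ∀ i, (p i).Prime) (hinj : Function.Injective p)
  (h2 : ∀ i, p i ≠ 2) (h3 : ∀ i, p i ≠ 3) (h8 : (∏ k, p k) % 8 = 1)

lemma Wmat_symm : (Wmat p)ᵀ = Wmat p := by
  rw [Wmat, fromBlocks_transpose]
  refine fromBlocks_eq ?_ ?_ ?_ ?_
  · decide
  · rw [WWs, WsW, vecMulVec_transpose]
  · rw [WWs, WsW, vecMulVec_transpose]
  · rw [WWW, fromBlocks_transpose]
    refine fromBlocks_eq ?_ ?_ ?_ ?_
    · rw [diagonal_transpose]
    · rw [Matrix.transpose_add, Matrix.transpose_transpose, diagonal_transpose]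
    · rw [Matrix.transpose_add, diagonal_transpose]
    · rw [diagonal_transpose]

def cvec {t' : ℕ} : Fin 6 ⊕ Fin t' ⊕ Fin t' → ZMod 2 := Sum.elim c6v (Sum.elim 0 onev)

lemma Wmat_diag : (fun k => Wmat p k k)
    = Sum.elim c6v (Sum.elim (rvec p 3) (rvec p (-3))) := by
  funext k
  rcases k with k | k | k
  · show W6 k k = c6v k
    fin_cases k <;> rfl
  · show WWW p (Sum.inl k) (Sum.inl k) = rvec p 3 k
    show diagonal (rvec p 3) k k = rvec p 3 k
    exact diagonal_apply_eq _ k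
  · show diagonal (rvec p (-3)) k k = rvec p (-3) k
    exact diagonal_apply_eq _ k

include hp hinj h2 h8 in
lemma Wmat_mulVec_c : Wmat p *ᵥ cvec = fun k => Wmat p k k := by
  rw [Wmat_diag]
  show Wmat p *ᵥ (Sum.elim c6v (Sum.elim 0 onev)) = _
  rw [Wmat, fromBlocks_mulVec, Sum.elim_comp_inl, Sum.elim_comp_inr]
  refine congrArg₂ Sum.elim ?_ ?_
  · have hW6 : W6 *ᵥ c6v = c6v := by decide
    rw [hW6, WsW, MonskyAux2.vecMulVec_mulVec, sumElim_dotProduct_sumElim,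
      dotProduct_zero, dot_onev, sum_eps p hp h2 h8, zero_add, zero_smul, add_zero]
  · rw [WWs, MonskyAux2.vecMulVec_mulVec]
    have hE3 : E6 3 ⬝ᵥ c6v = 0 := by decide
    rw [hE3, zero_smul, zero_add, WWW, fromBlocks_mulVec, Sum.elim_comp_inl,
      Sum.elim_comp_inr, Matrix.mulVec_zero, Matrix.mulVec_zero, zero_add,
      Matrix.add_mulVec, redei_mulVec_onev, diag_mulVec_onev, zero_add, zero_add,
      diag_mulVec_onev]

include hp hinj h2 h3 h8 in
lemma rank_mod_two :
    (((monskyA1 p).rank : ZMod 2)) = addLeg (-3) (∏ k, p k) := by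
  have hU := U_mul_Uinv p hp h2 h8
  have hV := V_mul_Vinv p
  have hUdet : IsUnit (Umat p).det := Matrix.isUnit_det_of_right_inverse hU
  have hVdet : IsUnit (Vmat p).det := Matrix.isUnit_det_of_right_inverse hV
  have hrank : (monskyA1 p).rank = (Wmat p).rank := by
    rw [← P_mul_V p hp hinj h2 h3 h8, ← U_mul_M p hp hinj h2 h3 h8,
      Matrix.rank_mul_eq_left_of_isUnit_det (Vmat p) _ hVdet,
      Matrix.rank_mul_eq_right_of_isUnit_det (Umat p) (monskyA1 p) hUdet]
  rw [hrank, MonskyAux2.rank_parity_symm (Wmat p) (Wmat_symm p) cvec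
    (Wmat_mulVec_c p hp hinj h2 h8), Wmat_diag]
  show (Sum.elim c6v (Sum.elim 0 onev)) ⬝ᵥ _ = _
  rw [sumElim_dotProduct_sumElim, sumElim_dotProduct_sumElim]
  have h1 : c6v ⬝ᵥ c6v = 0 := by decide
  rw [h1, zero_dotProduct, onev_dot, sum_del p hp h3, zero_add, zero_add]

end Final

end MonskyD

/-- For `ñ = p₁⋯p_t ≡ 1 (mod 8)` a product of distinct primes `≠ 2,3`, the rank
of the Monsky matrix `A₁` over `𝔽₂` is even if `ñ ≡ 1 (mod 3)` and odd if
`ñ ≡ 2 (mod 3)`. -/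
theorem monskyA1_rank_parity {t : ℕ} (p : Fin t → ℕ)
    (hp : ∀ i, (p i).Prime) (hinj : Function.Injective p)
    (h2 : ∀ i, p i ≠ 2) (h3 : ∀ i, p i ≠ 3)
    (h8 : (∏ k, p k) % 8 = 1) :
    ((∏ k, p k) % 3 = 1 → Even (monskyA1 p).rank) ∧
    ((∏ k, p k) % 3 = 2 → Odd (monskyA1 p).rank) := by
  have hpar := MonskyD.rank_mod_two p hp hinj h2 h3 h8
  have he3 := MonskyAux.addLeg_neg_three h8
  constructor
  · intro h1
    rw [he3.1 h1] at hpar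
    have hdvd : 2 ∣ (monskyA1 p).rank :=
      (ZMod.natCast_eq_zero_iff _ 2).1 hpar
    obtain ⟨k, hk⟩ := hdvd
    exact ⟨k, by omega⟩
  · intro h1
    rw [he3.2 h1] at hpar
    have hmod := MonskyAux.cast2 (monskyA1 p).rank
    rw [hpar] at hmod
    rcases Nat.mod_two_eq_zero_or_one (monskyA1 p).rank with h | h
    · rw [h] at hmod
      norm_num at hmod
    · exact Nat.odd_iff.2 h
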